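/- Let I ⊂ k[x_1,...,x_n] be the ideal generated by all square-free monomials of degree 2 (n ≥ 2). Then the minimal number of generators of I^k equals C(n+2k-1, n-1) - n·C(n+k-2, n-1). -/

import Mathlib

open MvPolynomial Finset

namespace Stmt19

variable {n : ℕ}

/-- The exponent vectors of the minimal generators of `I^k`. -/
noncomputable def Sk (n k : ℕ) : Finset (Fin n →₀ ℕ) :=
  (Finset.finsuppAntidiag Finset.univ (2*k)).filter fun a => ∀ i, a i ≤ k

lemma mem_Sk {k : ℕ} {a : Fin n →₀ ℕ} :
    a ∈ Sk n k ↔ (∑ i, a i = 2*k) ∧ ∀ i, a i ≤ k := by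
  simp [Sk, Finset.mem_finsuppAntidiag]

lemma ind_apply (s : Finset (Fin n)) (j : Fin n) :
    (∑ i ∈ s, Finsupp.single i (1:ℕ)) j = if j ∈ s then 1 else 0 := by
  rw [Finset.sum_apply']
  simp_rw [Finsupp.single_apply]
  exact Finset.sum_ite_eq' s j (fun _ => 1)

lemma sum_ind (s : Finset (Fin n)) : (∑ j, (∑ i ∈ s, Finsupp.single i (1:ℕ)) j) = s.card := by
  simp_rw [ind_apply]
  rw [Finset.sum_ite_mem, Finset.univ_inter, Finset.sum_const, smul_eq_mul, mul_one]

lemma decomp (hn : 2 ≤ n) (k : ℕ) (a : Fin n →₀ ℕ) (hd : ∑ i, a i = 2*(k+1))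
    (hb : ∀ i, a i ≤ k+1) :
    ∃ s : Finset (Fin n), ∃ b : Fin n →₀ ℕ, s.card = 2 ∧ (∑ i, b i = 2*k) ∧
      (∀ i, b i ≤ k) ∧ a = b + ∑ i ∈ s, Finsupp.single i 1 := by
  have h1 : (Finset.univ : Finset (Fin n)).Nonempty :=
    ⟨⟨0, by omega⟩, Finset.mem_univ _⟩
  obtain ⟨i, -, hi⟩ := Finset.exists_max_image Finset.univ a h1
  have h2 : (Finset.univ.erase i).Nonempty := by
    rw [← Finset.card_pos, Finset.card_erase_of_mem (Finset.mem_univ i)]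
    simp only [Finset.card_univ, Fintype.card_fin]
    omega
  obtain ⟨j, hj, hjmax⟩ := Finset.exists_max_image _ a h2
  have hji : j ≠ i := (Finset.mem_erase.mp hj).1
  have haj : 1 ≤ a j := by
    by_contra h
    push_neg at h
    interval_cases h' : a j
    have : ∀ l ∈ Finset.univ, l ≠ i → a l = 0 := by
      intro l _ hl
      have := hjmax l (Finset.mem_erase.mpr ⟨hl, Finset.mem_univ l⟩)
      omega
    rw [Finset.sum_eq_single_of_mem i (Finset.mem_univ i) this] at hd
    have := hb i
    omega
  have hai : 1 ≤ a i := le_trans haj (hi j (Finset.mem_univ j))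
  set c : Fin n →₀ ℕ := ∑ l ∈ {i, j}, Finsupp.single l 1 with hc
  have hcl : ∀ l, c l = if l ∈ ({i, j} : Finset (Fin n)) then 1 else 0 := fun l => ind_apply _ l
  have hcle : ∀ l, c l ≤ a l := by
    intro l
    rw [hcl]
    split_ifs with h
    · rcases Finset.mem_insert.mp h with rfl | h
      · exact hai
      · rw [Finset.mem_singleton] at h; subst h; exact haj
    · exact Nat.zero_le _
  have hkey : a = (a - c) + c := by
    ext l
    rw [Finsupp.add_apply, Finsupp.tsub_apply]
    have := hcle l
    omega
  have hsumc : ∑ l, c l = 2 := by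
    rw [hc, sum_ind, Finset.card_insert_of_notMem (by simpa using hji.symm),
      Finset.card_singleton]
  have hbound : ∀ l, (a - c) l ≤ k := by
    intro l
    rw [Finsupp.tsub_apply, hcl]
    split_ifs with h
    · have := hb l; omega
    · simp only [Finset.mem_insert, Finset.mem_singleton, not_or] at h
      obtain ⟨hli, hlj⟩ := h
      by_contra hcon
      push_neg at hcon
      have hal : a l = k + 1 := le_antisymm (hb l) hcon
      have hail : a i = k + 1 := le_antisymm (hb i) (hal ▸ hi l (Finset.mem_univ l))
      have hajl : a j = k + 1 :=
        le_antisymm (hb j) (hal ▸ hjmax l (Finset.mem_erase.mpr ⟨hli, Finset.mem_univ l⟩))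
      have hsub : ({i, j, l} : Finset (Fin n)).sum a ≤ ∑ m, a m :=
        Finset.sum_le_sum_of_subset (Finset.subset_univ _)
      rw [Finset.sum_insert (by simp [hji.symm, Ne.symm hli]),
        Finset.sum_insert (by simp [Ne.symm hlj]), Finset.sum_singleton] at hsub
      omega
  have hsum : ∑ l, (a - c) l = 2 * k := by
    have := congrArg (fun f : Fin n →₀ ℕ => ∑ l, f l) hkey
    simp only [Finsupp.add_apply, Finset.sum_add_distrib] at this
    omega
  exact ⟨{i, j}, a - c, by
    rw [Finset.card_insert_of_notMem (by simpa using hji.symm), Finset.card_singleton],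
    hsum, hbound, hkey⟩


variable (K : Type*) [Field K]

lemma prod_X_eq (s : Finset (Fin n)) :
    (∏ i ∈ s, X i : MvPolynomial (Fin n) K) = monomial (∑ i ∈ s, Finsupp.single i 1) 1 := by
  induction s using Finset.cons_induction with
  | empty => simp
  | cons i s hi ih => rw [Finset.prod_cons, Finset.sum_cons, ih, X, monomial_mul, one_mul]

lemma Sk_one (hn : 2 ≤ n) :
    (fun a => monomial a (1:K)) '' ↑(Sk n 1) =
      {f : MvPolynomial (Fin n) K | ∃ s : Finset (Fin n), s.card = 2 ∧ f = ∏ i ∈ s, X i} := by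
  ext f
  constructor
  · rintro ⟨a, ha, rfl⟩
    rw [Finset.mem_coe, mem_Sk] at ha
    obtain ⟨hsum, hle⟩ := ha
    have hone : ∀ i ∈ a.support, a i = 1 := by
      intro i hi
      have h1 : a i ≠ 0 := Finsupp.mem_support_iff.mp hi
      have := hle i
      omega
    have hrepr : a = ∑ i ∈ a.support, Finsupp.single i 1 := by
      ext j
      rw [ind_apply]
      split_ifs with h
      · exact hone j h
      · exact Finsupp.notMem_support_iff.mp h
    refine ⟨a.support, ?_, ?_⟩
    · have : ∑ i, a i = ∑ i ∈ a.support, a i :=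
        (Finset.sum_subset (Finset.subset_univ _)
          (fun i _ h => Finsupp.notMem_support_iff.mp h)).symm
      rw [this, Finset.sum_congr rfl hone, Finset.sum_const, smul_eq_mul, mul_one] at hsum
      omega
    · rw [prod_X_eq, ← hrepr]
  · rintro ⟨s, hs, rfl⟩
    refine ⟨∑ i ∈ s, Finsupp.single i 1, ?_, (prod_X_eq K s).symm⟩
    rw [Finset.mem_coe, mem_Sk]
    constructor
    · rw [sum_ind, hs]
    · intro i
      rw [ind_apply]
      split_ifs <;> omega

lemma span_Sk (hn : 2 ≤ n) (k : ℕ) :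
    Ideal.span ((fun a => monomial a (1:K)) '' ↑(Sk n k)) =
      (Ideal.span {f : MvPolynomial (Fin n) K |
        ∃ s : Finset (Fin n), s.card = 2 ∧ f = ∏ i ∈ s, X i}) ^ k := by
  induction k with
  | zero =>
    have h0 : Sk n 0 = {0} := by
      ext a
      rw [mem_Sk, Finset.mem_singleton]
      constructor
      · rintro ⟨h1, -⟩
        ext i
        have : a i ≤ ∑ j, a j := Finset.single_le_sum (fun j _ => Nat.zero_le _) (Finset.mem_univ i)
        simp only [Finsupp.coe_zero, Pi.zero_apply]
        omega
      · rintro rfl; simp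
    have himg : ((fun a => monomial a (1:K)) '' ((Sk n 0 : Finset (Fin n →₀ ℕ)) : Set (Fin n →₀ ℕ))) = {1} := by
      rw [h0]
      ext f
      simp [eq_comm]
    rw [pow_zero, Ideal.one_eq_top, himg]
    exact Ideal.span_singleton_one
  | succ k ih =>
    rw [pow_succ, ← ih, ← Sk_one K hn, Ideal.span_mul_span]
    apply le_antisymm
    · rw [Ideal.span_le]
      rintro z ⟨a, ha, rfl⟩
      rw [Finset.mem_coe, mem_Sk] at ha
      obtain ⟨s, b, hcard, hsum, hle, rfl⟩ := decomp hn k a ha.1 ha.2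
      apply Ideal.subset_span
      have hb' : b ∈ ((Sk n k : Finset (Fin n →₀ ℕ)) : Set (Fin n →₀ ℕ)) := by
        rw [Finset.mem_coe, mem_Sk]; exact ⟨hsum, hle⟩
      have hq' : (∑ i ∈ s, Finsupp.single i 1) ∈
          ((Sk n 1 : Finset (Fin n →₀ ℕ)) : Set (Fin n →₀ ℕ)) := by
        rw [Finset.mem_coe, mem_Sk]
        refine ⟨by rw [sum_ind, hcard], fun i => ?_⟩
        rw [ind_apply]; split_ifs <;> omega
      refine Set.mem_mul.mpr ⟨monomial b 1, ⟨b, hb', rfl⟩,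
        monomial (∑ i ∈ s, Finsupp.single i 1) 1,
          ⟨∑ i ∈ s, Finsupp.single i 1, hq', rfl⟩, ?_⟩
      rw [monomial_mul, one_mul]
    · rw [Ideal.span_le]
      rintro z hz
      obtain ⟨x, hx, y, hy, hz⟩ := Set.mem_mul.mp hz
      subst hz
      obtain ⟨a, ha, rfl⟩ := hx
      obtain ⟨c, hc, rfl⟩ := hy
      rw [Finset.mem_coe, mem_Sk] at ha hc
      rw [monomial_mul, one_mul]
      apply Ideal.subset_span
      refine ⟨a + c, ?_, rfl⟩
      rw [Finset.mem_coe, mem_Sk]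
      constructor
      · simp only [Finsupp.add_apply, Finset.sum_add_distrib]
        omega
      · intro i
        have := ha.2 i
        have := hc.2 i
        simp only [Finsupp.add_apply]
        omega

lemma degree_eq_sum (d : Fin n →₀ ℕ) : d.degree = ∑ i, d i :=
  Finset.sum_subset (Finset.subset_univ _) (fun _ _ h => Finsupp.notMem_support_iff.mp h)

lemma support_deg (k : ℕ) (g : MvPolynomial (Fin n) K)
    (hg : g ∈ Ideal.span ((fun a => monomial a (1:K)) '' ↑(Sk n k))) :
    ∀ d ∈ g.support, 2*k ≤ ∑ i, d i := by
  intro d hd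
  obtain ⟨si, hsi, hle⟩ := mem_ideal_span_monomial_image.mp hg d hd
  rw [Finset.mem_coe, mem_Sk] at hsi
  calc 2*k = ∑ i, si i := hsi.1.symm
    _ ≤ ∑ i, d i := Finset.sum_le_sum fun i _ => Finsupp.le_def.mp hle i

lemma homog_mul (k : ℕ) (c g : MvPolynomial (Fin n) K)
    (hg : ∀ d ∈ g.support, 2*k ≤ ∑ i, d i) :
    homogeneousComponent (2*k) (c * g) = constantCoeff c • homogeneousComponent (2*k) g := by
  ext d
  rw [coeff_smul, coeff_homogeneousComponent, coeff_homogeneousComponent]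
  split_ifs with h
  · rw [coeff_mul, Finset.sum_eq_single_of_mem ((0 : Fin n →₀ ℕ), d)
      (Finset.HasAntidiagonal.mem_antidiagonal.mpr (zero_add d))]
    · rw [constantCoeff_eq, smul_eq_mul]
    · rintro ⟨u, v⟩ hmem hne
      rcases eq_or_ne (coeff v g) 0 with h0 | h0
      · rw [h0, mul_zero]
      · exfalso
        apply hne
        have hv := hg v (mem_support_iff.mpr h0)
        have huv : u + v = d := Finset.HasAntidiagonal.mem_antidiagonal.mp hmem
        have hsum : ∑ i, u i + ∑ i, v i = ∑ i, d i := by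
          rw [← huv]
          simp [Finsupp.add_apply, Finset.sum_add_distrib]
        have hdeg : ∑ i, d i = 2*k := by rw [← degree_eq_sum, h]
        have hu0 : ∑ i, u i = 0 := by omega
        have hu : u = 0 := by
          ext i
          have : u i ≤ ∑ i, u i :=
            Finset.single_le_sum (fun j _ => Nat.zero_le _) (Finset.mem_univ i)
          simp only [Finsupp.coe_zero, Pi.zero_apply]
          omega
        subst hu
        rw [zero_add] at huv
        rw [huv]
  · rw [smul_zero]

lemma mem_span_homog (hn : 2 ≤ n) (k : ℕ) (G' : Finset (MvPolynomial (Fin n) K))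
    (hG' : Ideal.span (G' : Set (MvPolynomial (Fin n) K)) =
      Ideal.span ((fun a => monomial a (1:K)) '' ↑(Sk n k)))
    {a : Fin n →₀ ℕ} (ha : a ∈ Sk n k) :
    monomial a (1:K) ∈
      Submodule.span K ((homogeneousComponent (2*k)) '' (G' : Set (MvPolynomial (Fin n) K))) := by
  have hmem : monomial a (1:K) ∈ Ideal.span (G' : Set (MvPolynomial (Fin n) K)) := by
    rw [hG']
    exact Ideal.subset_span ⟨a, ha, rfl⟩
  rw [← Ideal.submodule_span_eq] at hmem
  obtain ⟨f, -, hf⟩ := Submodule.mem_span_finset.mp hmem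
  have hm : homogeneousComponent (2*k) (monomial a (1:K)) = monomial a 1 := by
    rw [homogeneousComponent_of_mem ((mem_homogeneousSubmodule _ _).mpr
      (isHomogeneous_monomial _ (degree_eq_sum a))), if_pos (mem_Sk.mp ha).1.symm]
  have happ := congrArg (homogeneousComponent (2*k)) hf
  rw [map_sum, hm] at happ
  rw [← happ]
  refine Submodule.sum_mem _ fun g hg => ?_
  have hgdeg : ∀ d ∈ g.support, 2*k ≤ ∑ i, d i := by
    refine support_deg K k g ?_
    rw [← hG']
    exact Ideal.subset_span hg
  rw [smul_eq_mul, homog_mul K k (f g) g hgdeg]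
  exact Submodule.smul_mem _ _ (Submodule.subset_span ⟨g, hg, rfl⟩)


lemma sum_single_fin (j : Fin n) (c : ℕ) : ∑ i, (Finsupp.single j c) i = c := by
  simp_rw [Finsupp.single_apply]
  simp

lemma card_antidiag (m : ℕ) (hn : 1 ≤ n) :
    (Finset.finsuppAntidiag (Finset.univ : Finset (Fin n)) m).card = (n + m - 1).choose (n-1) := by
  classical
  have e1 : {x // x ∈ Finset.finsuppAntidiag (Finset.univ : Finset (Fin n)) m} ≃
      {P : Fin n →₀ ℕ // P.sum (fun _ => id) = m} :=
    Equiv.subtypeEquivRight (by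
      intro a
      rw [Finset.mem_finsuppAntidiag']
      simp only [Finset.subset_univ, and_true]
      rfl)
  have hc : (Finset.finsuppAntidiag (Finset.univ : Finset (Fin n)) m).card
      = Fintype.card (Sym (Fin n) m) := by
    rw [← Fintype.card_coe]
    exact Fintype.card_congr (e1.trans (Sym.equivNatSum (Fin n) m).symm)
  rw [hc, Sym.card_sym_eq_choose, Fintype.card_fin]
  have h1 : m ≤ n + m - 1 := by omega
  have h2 : n + m - 1 - m = n - 1 := by omega
  rw [← h2]
  exact (Nat.choose_symm h1).symm

lemma card_bad (hn : 2 ≤ n) (k : ℕ) (hk : 1 ≤ k) :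
    ((Finset.finsuppAntidiag (Finset.univ : Finset (Fin n)) (2*k)).filter
      (fun a => ¬ ∀ i, a i ≤ k)).card = n * (n + k - 2).choose (n-1) := by
  classical
  have hbij : ((Finset.univ : Finset (Fin n)) ×ˢ
      Finset.finsuppAntidiag (Finset.univ : Finset (Fin n)) (k-1)).card =
      ((Finset.finsuppAntidiag (Finset.univ : Finset (Fin n)) (2*k)).filter
        (fun a => ¬ ∀ i, a i ≤ k)).card := by
    apply Finset.card_bij (fun p _ => p.2 + Finsupp.single p.1 (k+1))
    · rintro ⟨i, b⟩ hp
      rw [Finset.mem_product, Finset.mem_finsuppAntidiag] at hp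
      obtain ⟨-, hb, -⟩ := hp
      have hb' : ∑ x, b x = k - 1 := hb
      rw [Finset.mem_filter, Finset.mem_finsuppAntidiag]
      refine ⟨⟨?_, Finset.subset_univ _⟩, ?_⟩
      · show ∑ x, (b + Finsupp.single i (k+1)) x = 2*k
        simp only [Finsupp.add_apply, Finset.sum_add_distrib, sum_single_fin]
        omega
      · push_neg
        exact ⟨i, by simp only [Finsupp.add_apply, Finsupp.single_eq_same]; omega⟩
    · rintro ⟨i₁, b₁⟩ hp₁ ⟨i₂, b₂⟩ hp₂ heq
      rw [Finset.mem_product, Finset.mem_finsuppAntidiag] at hp₁ hp₂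
      have hb₁ : ∀ j, b₁ j ≤ k - 1 := fun j =>
        (Finset.single_le_sum (fun l _ => Nat.zero_le (b₁ l)) (Finset.mem_univ j)).trans
          hp₁.2.1.le
      have hb₂ : ∀ j, b₂ j ≤ k - 1 := fun j =>
        (Finset.single_le_sum (fun l _ => Nat.zero_le (b₂ l)) (Finset.mem_univ j)).trans
          hp₂.2.1.le
      have hii : i₁ = i₂ := by
        by_contra hne
        have h1 := congrArg (fun f : Fin n →₀ ℕ => f i₁) heq
        simp only [Finsupp.add_apply, Finsupp.single_eq_same,
          Finsupp.single_eq_of_ne' (Ne.symm hne)] at h1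
        have := hb₂ i₁
        omega
      subst hii
      have hb : b₁ = b₂ := by
        ext j
        have h1 := congrArg (fun f : Fin n →₀ ℕ => f j) heq
        simp only [Finsupp.add_apply] at h1
        omega
      rw [hb]
    · intro a ha
      rw [Finset.mem_filter, Finset.mem_finsuppAntidiag] at ha
      obtain ⟨⟨hsum, -⟩, hbad⟩ := ha
      push_neg at hbad
      obtain ⟨i, hi⟩ := hbad
      have hik : k + 1 ≤ a i := hi
      have hsum' : ∑ l, a l = 2*k := hsum
      refine ⟨(i, a - Finsupp.single i (k+1)), ?_, ?_⟩
      · rw [Finset.mem_product, Finset.mem_finsuppAntidiag]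
        have heqa : (a - Finsupp.single i (k+1)) + Finsupp.single i (k+1) = a := by
          ext l
          rw [Finsupp.add_apply, Finsupp.tsub_apply]
          rcases eq_or_ne i l with rfl | hne
          · rw [Finsupp.single_eq_same]; omega
          · rw [Finsupp.single_eq_of_ne' hne]; omega
        have hs := congrArg (fun f : Fin n →₀ ℕ => ∑ l, f l) heqa
        simp only [Finsupp.add_apply, Finset.sum_add_distrib, sum_single_fin] at hs
        refine ⟨Finset.mem_univ i, ?_, Finset.subset_univ _⟩
        show ∑ l, (a - Finsupp.single i (k+1)) l = k - 1
        omega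
      · ext l
        rw [Finsupp.add_apply, Finsupp.tsub_apply]
        rcases eq_or_ne i l with rfl | hne
        · rw [Finsupp.single_eq_same]; omega
        · rw [Finsupp.single_eq_of_ne' hne]; omega
  rw [← hbij, Finset.card_product, Finset.card_univ, Fintype.card_fin,
    card_antidiag (k-1) (by omega)]
  congr 2
  omega

lemma card_Sk (hn : 2 ≤ n) (k : ℕ) (hk : 1 ≤ k) :
    ((Sk n k).card : ℤ) = ((n + 2*k - 1).choose (n-1) : ℤ) - n * ((n + k - 2).choose (n-1)) := by
  classical
  have h := Finset.card_filter_add_card_filter_not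
    (s := Finset.finsuppAntidiag (Finset.univ : Finset (Fin n)) (2*k))
    (p := fun a => ∀ i, a i ≤ k)
  rw [card_antidiag (2*k) (by omega), card_bad hn k hk] at h
  have hSk : (Sk n k).card + n * (n + k - 2).choose (n-1) = (n + 2*k - 1).choose (n-1) := h
  omega

end Stmt19

open Stmt19 in
/-- For the ideal I generated by all square-free monomials of degree 2 in n ≥ 2 variables,
the minimal number of generators of I^k equals C(n+2k-1, n-1) - n·C(n+k-2, n-1). -/
theorem stmt_19 (K : Type*) [Field K] (n k : ℕ) (hn : 2 ≤ n) (hk : 1 ≤ k) :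
    ∃ G : Finset (MvPolynomial (Fin n) K),
      Ideal.span (G : Set (MvPolynomial (Fin n) K)) =
        (Ideal.span {f : MvPolynomial (Fin n) K |
          ∃ s : Finset (Fin n), s.card = 2 ∧ f = ∏ i ∈ s, X i}) ^ k ∧
      (∀ G' : Finset (MvPolynomial (Fin n) K),
        Ideal.span (G' : Set (MvPolynomial (Fin n) K)) =
          (Ideal.span {f : MvPolynomial (Fin n) K |
            ∃ s : Finset (Fin n), s.card = 2 ∧ f = ∏ i ∈ s, X i}) ^ k →
        G.card ≤ G'.card) ∧
      (G.card : ℤ) = ((n + 2 * k - 1).choose (n - 1) : ℤ)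
        - n * ((n + k - 2).choose (n - 1)) := by
  classical
  refine ⟨(Sk n k).image (fun a => monomial a (1:K)), ?_, ?_, ?_⟩
  · rw [Finset.coe_image, span_Sk K hn k]
  · intro G' hG'
    rw [← span_Sk K hn k, ← Finset.coe_image] at hG'
    have hG'' : Ideal.span (G' : Set (MvPolynomial (Fin n) K)) =
        Ideal.span ((fun a => monomial a (1:K)) '' ↑(Sk n k)) := by
      rw [hG', Finset.coe_image]
    have li : LinearIndependent K (fun a : Fin n →₀ ℕ => monomial a (1:K)) := by
      have := (basisMonomials (Fin n) K).linearIndependent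
      rwa [coe_basisMonomials] at this
    have li2 : LinearIndependent K
        (fun a : {x // x ∈ Sk n k} => monomial (a : Fin n →₀ ℕ) (1:K)) :=
      li.comp _ Subtype.val_injective
    have hrange : Set.range (fun a : {x // x ∈ Sk n k} => monomial (a : Fin n →₀ ℕ) (1:K)) =
        ↑((Sk n k).image (fun a => monomial a (1:K))) := by
      rw [Finset.coe_image]
      rw [show (fun a : {x // x ∈ Sk n k} => monomial (a : Fin n →₀ ℕ) (1:K)) =
        (fun a => monomial a (1:K)) ∘ (Subtype.val) from rfl, Set.range_comp,
        Subtype.range_coe_subtype]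
      rfl
    have h1 : Module.finrank K
        (Submodule.span K (((Sk n k).image (fun a => monomial a (1:K)) : Finset _) :
          Set (MvPolynomial (Fin n) K))) = (Sk n k).card := by
      rw [← hrange, finrank_span_eq_card li2, Fintype.card_coe]
    have h2 : Submodule.span K (((Sk n k).image (fun a => monomial a (1:K)) : Finset _) :
          Set (MvPolynomial (Fin n) K)) ≤
        Submodule.span K
          ((G'.image (homogeneousComponent (2*k)) : Finset _) : Set (MvPolynomial (Fin n) K)) := by
      rw [Submodule.span_le]
      intro x hx
      rw [Finset.mem_coe, Finset.mem_image] at hx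
      obtain ⟨a, ha, rfl⟩ := hx
      have := mem_span_homog K hn k G' hG'' ha
      rwa [Finset.coe_image]
    calc ((Sk n k).image (fun a => monomial a (1:K))).card
        = (Sk n k).card := Finset.card_image_of_injective _
          (monomial_left_injective one_ne_zero)
      _ = Module.finrank K (Submodule.span K
            (((Sk n k).image (fun a => monomial a (1:K)) : Finset _) :
              Set (MvPolynomial (Fin n) K))) := h1.symm
      _ ≤ Module.finrank K (Submodule.span K
            ((G'.image (homogeneousComponent (2*k)) : Finset _) :
              Set (MvPolynomial (Fin n) K))) := Submodule.finrank_mono h2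
      _ ≤ (G'.image (homogeneousComponent (2*k))).card := finrank_span_finset_le_card _
      _ ≤ G'.card := Finset.card_image_le
  · rw [Finset.card_image_of_injective _ (monomial_left_injective one_ne_zero)]
    exact card_Sk hn k hk
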